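/- The front compatibility criterion is preserved under the front-element dynamics: if a one-parameter family of solutions (r(λ,t), g(λ,t)) of the front-element ODE satisfies g·J(∂r/∂λ) = 0 and |g|=1, g·(∂g/∂λ)=0 at time t, then d/dt [g·J(∂r/∂λ)] = 0 at that time. -/

import Mathlib

open Matrix

/-- Rotation by π/2 counterclockwise. -/
def J : Matrix (Fin 2) (Fin 2) ℝ := !![0, -1; 1, 0]

/-- The front compatibility criterion is preserved under the front-element
dynamics.  Here `g t` is the tangent orientation of the front element at parameter value
`λ₀` and time `t`, `rlam t = ∂r/∂λ`, `glam t = ∂g/∂λ`, `A = ∇u(r(λ₀,t₀),t₀)` is the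
velocity gradient at the relevant point, and `n = −J g(t₀)`.  If at time `t₀` the
compatibility condition `g·J(∂r/∂λ) = 0` holds together with `|g| = 1` and `g·(∂g/∂λ) = 0`,
and `g`, `∂r/∂λ` evolve by the front-element ODE (with equality of mixed partials),
then `d/dt [g·J(∂r/∂λ)] = 0` at `t₀`. -/
theorem front_compatibility_preserved
    (v₀ : ℝ) (hv₀ : 0 ≤ v₀)
    (A : Matrix (Fin 2) (Fin 2) ℝ)
    (g rlam glam : ℝ → Fin 2 → ℝ) (t₀ : ℝ)
    (n : Fin 2 → ℝ) (hn : n = -(J *ᵥ g t₀))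
    (hg1 : g t₀ ⬝ᵥ g t₀ = 1)
    (hcomp : g t₀ ⬝ᵥ (J *ᵥ rlam t₀) = 0)
    (hglam : g t₀ ⬝ᵥ glam t₀ = 0)
    (hgdot : HasDerivAt g ((g t₀ ⬝ᵥ (A *ᵥ n)) • n) t₀)
    (hrlamdot : HasDerivAt rlam
      (A.transpose *ᵥ rlam t₀ - v₀ • (J *ᵥ glam t₀)) t₀) :
    HasDerivAt (fun t => g t ⬝ᵥ (J *ᵥ rlam t)) 0 t₀ := by
  have e00 : _root_.J 0 0 = 0 := rfl
  have e01 : _root_.J 0 1 = -1 := rfl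
  have e10 : _root_.J 1 0 = 1 := rfl
  have e11 : _root_.J 1 1 = 0 := rfl
  have hG := hasDerivAt_pi.mp hgdot
  have hR := hasDerivAt_pi.mp hrlamdot
  have key := ((hG 0).mul (hR 1)).neg.add ((hG 1).mul (hR 0))
  have heq : (fun t => g t ⬝ᵥ (_root_.J *ᵥ rlam t))
      = (fun t => -(g t 0 * rlam t 1) + g t 1 * rlam t 0) := by
    funext t
    simp [dotProduct, mulVec, Fin.sum_univ_two, e00, e01, e10, e11]

  rw [heq]
  refine key.congr_deriv ?_
  symm
  simp only [hn, mulVec, dotProduct, Fin.sum_univ_two, Matrix.transpose_apply,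
    Pi.smul_apply, Pi.sub_apply, Pi.neg_apply, smul_eq_mul,
    e00, e01, e10, e11] at *
  set a := g t₀ 0; set b := g t₀ 1; set p := rlam t₀ 0; set q := rlam t₀ 1
  set c := glam t₀ 0; set d := glam t₀ 1
  linear_combination (-(b * (b * A 0 0 - a * A 0 1)) + a * (b * A 1 0 - a * A 1 1)) * hcomp
    - v₀ * hglam + ((p * (b * A 0 0 - a * A 0 1)) + q * (b * A 1 0 - a * A 1 1)) * hg1
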